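/- arXiv:2211.12802 — 4 statements merged into one kernel-verified Lean document; each statement's English description precedes it below -/
import Mathlib

section
/- Let x ∈ ℝ^n, 0 < r < 1, and A ⊂ B(x,r). Then |A|/|B(x,r)| ≤ (2 C_I/ω_n) · cap₁(A)/r^{n-1}, where C_I is the constant in the relative isoperimetric inequality, ω_n = |B(0,1)|, |·| denotes Lebesgue measure, and cap₁ is the Sobolev 1-capacity. -/
open MeasureTheory Metric Set Filter ENNReal Topology

noncomputable section

/-- Euclidean space `ℝⁿ`. -/
abbrev En (n : ℕ) : Type := EuclideanSpace ℝ (Fin n)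

variable {n : ℕ}

/-- `g` is the weak (distributional) gradient of `u : ℝⁿ → ℝ` on all of `ℝⁿ`. -/
def IsWeakGrad (u : En n → ℝ) (g : En n → (En n →L[ℝ] ℝ)) : Prop :=
  ∀ φ : En n → ℝ, ContDiff ℝ 1 φ → HasCompactSupport φ →
    ∀ v : En n, ∫ x, u x * fderiv ℝ φ x v = - ∫ x, φ x * g x v

/-- The Sobolev 1-capacity: infimum of `W^{1,1}` norms of functions `u ≥ 1` on a
neighborhood of `A`. -/
def cap1 (A : Set (En n)) : ℝ≥0∞ :=
  sInf { c : ℝ≥0∞ | ∃ u : En n → ℝ, ∃ g : En n → (En n →L[ℝ] ℝ),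
    Integrable u ∧ Integrable (fun x => ‖g x‖) ∧ IsWeakGrad u g ∧
    (∃ V : Set (En n), IsOpen V ∧ A ⊆ V ∧ ∀ x ∈ V, 1 ≤ u x) ∧
    c = ENNReal.ofReal ((∫ x, |u x|) + ∫ x, ‖g x‖) }

/-- A set `U ⊆ ℝⁿ` is 1-finely open. -/
def FinelyOpen1 (U : Set (En n)) : Prop :=
  ∀ x ∈ U, Tendsto (fun r : ℝ => cap1 (Uᶜ ∩ ball x r) / ENNReal.ofReal (r ^ (n - 1)))
    (𝓝[>] 0) (𝓝 0)

/-- The relaxed quasiconformality quotient `K_{f,U}(x,r)`. -/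
def KfU (f : En n → En n) (U : Set (En n)) (x : En n) (r : ℝ) : ℝ≥0∞ :=
  if volume (f '' ball x r) = 0 then ∞
  else (EMetric.diam (f '' (ball x r ∩ U)) ^ n / volume (f '' ball x r)) ^ (((n : ℝ) - 1)⁻¹)

/-- Fine quasiconformal dilatation `K_f^fine(x)`. -/
def Kfine (f : En n → En n) (x : En n) : ℝ≥0∞ :=
  ⨅ (U : Set (En n)) (_ : FinelyOpen1 U) (_ : x ∈ U),
    Filter.limsup (fun r => KfU f U x r) (𝓝[>] 0)

/-- Metric quasiconformal dilatation `K_f(x)`. -/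
def Kmetric (f : En n → En n) (x : En n) : ℝ≥0∞ :=
  Filter.limsup (fun r => KfU f univ x r) (𝓝[>] 0)

/-- Volume derivative (Jacobian) `J_f(x)`. -/
def Jvol (f : En n → En n) (x : En n) : ℝ≥0∞ :=
  Filter.limsup (fun r => volume (f '' ball x r) / volume (ball x r)) (𝓝[>] 0)

/-- `g` is the weak gradient of the mapping `f : ℝⁿ → ℝⁿ` on the open set `Ω`. -/
def HasWeakGradOn (f : En n → En n) (g : En n → (En n →L[ℝ] En n)) (Ω : Set (En n)) : Prop :=
  ∀ φ : En n → ℝ, ContDiff ℝ 1 φ → HasCompactSupport φ → tsupport φ ⊆ Ω →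
    ∀ v : En n, ∫ x in Ω, (fderiv ℝ φ x v) • f x = - ∫ x in Ω, φ x • g x v

/-- The precise representative `f*` (componentwise limsup of ball averages). -/
def precise (f : En n → En n) (x : En n) : En n :=
  (EuclideanSpace.equiv (Fin n) ℝ).symm
    (fun i => Filter.limsup (fun r => ⨍ y in ball x r, f y i) (𝓝[>] 0))

/-- Centered Hardy–Littlewood maximal function of `u : ℝⁿ → ℝ`. -/
def maxFn (u : En n → ℝ) (x : En n) : ℝ≥0∞ :=
  ⨆ (r : ℝ) (_ : 0 < r), (volume (ball x r))⁻¹ * ∫⁻ y in ball x r, ‖u y‖₊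

/-- Centered Hardy–Littlewood maximal function of `ρ : ℝⁿ → ℝ≥0∞`. -/
def maxFn' (ρ : En n → ℝ≥0∞) (x : En n) : ℝ≥0∞ :=
  ⨆ (r : ℝ) (_ : 0 < r), (volume (ball x r))⁻¹ * ∫⁻ y in ball x r, ρ y

open scoped NNReal Convolution

lemma young_conv (φ : ContDiffBump (0 : En n)) (h : En n → ℝ)
    (hint : Integrable h) (hpos : ∀ t, 0 ≤ h t) :
    ∫⁻ z, ENNReal.ofReal (∫ t, φ.normed volume (z - t) * h t) ≤ ENNReal.ofReal (∫ t, h t) := by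
  set ρ := φ.normed volume with hρ
  have ρc : Continuous ρ := φ.continuous_normed
  have ρnn : ∀ y, 0 ≤ ρ y := φ.nonneg_normed
  have hmul : ∀ z, Integrable (fun t => ρ (z - t) * h t) := by
    intro z
    obtain ⟨M, hM⟩ := ρc.bounded_above_of_compact_support φ.hasCompactSupport_normed
    exact hint.bdd_mul ((ρc.comp (continuous_const.sub continuous_id)).aestronglyMeasurable)
      (Filter.Eventually.of_forall fun t => hM _)
  have step1 : ∀ z, ENNReal.ofReal (∫ t, ρ (z - t) * h t)
      = ∫⁻ t, ENNReal.ofReal (ρ (z - t)) * ENNReal.ofReal (h t) := by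
    intro z
    rw [MeasureTheory.ofReal_integral_eq_lintegral_ofReal (hmul z)
      (Filter.Eventually.of_forall fun t => mul_nonneg (ρnn _) (hpos t))]
    congr 1
    ext t
    exact ENNReal.ofReal_mul (ρnn _)
  apply le_of_eq
  calc ∫⁻ z, ENNReal.ofReal (∫ t, ρ (z - t) * h t)
      = ∫⁻ z, ∫⁻ t, ENNReal.ofReal (ρ (z - t)) * ENNReal.ofReal (h t) := by
        simp_rw [step1]
    _ = ∫⁻ t, ∫⁻ z, ENNReal.ofReal (ρ (z - t)) * ENNReal.ofReal (h t) := by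
        apply lintegral_lintegral_swap
        have m1 : Measurable fun p : En n × En n => ENNReal.ofReal (ρ (p.1 - p.2)) :=
          (ρc.comp (continuous_fst.sub continuous_snd)).measurable.ennreal_ofReal
        have m2 : AEMeasurable (fun p : En n × En n => ENNReal.ofReal (h p.2))
            (volume.prod volume) := (hint.aemeasurable.ennreal_ofReal).comp_snd
        exact m1.aemeasurable.mul m2
    _ = ∫⁻ t, ENNReal.ofReal (h t) * ∫⁻ z, ENNReal.ofReal (ρ (z - t)) := by
        congr 1; ext t
        have m3 : AEMeasurable (fun z : En n => ENNReal.ofReal (ρ (z - t))) volume :=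
          ((ρc.comp (continuous_id.sub continuous_const)).measurable.ennreal_ofReal).aemeasurable
        rw [lintegral_mul_const'' _ m3, mul_comm]
    _ = ∫⁻ t, ENNReal.ofReal (h t) := by
        congr 1; ext t
        have : ∫⁻ z, ENNReal.ofReal (ρ (z - t)) = ENNReal.ofReal (∫ z, ρ (z - t)) := by
          rw [MeasureTheory.ofReal_integral_eq_lintegral_ofReal
            (by
              apply Continuous.integrable_of_hasCompactSupport
              · exact ρc.comp (continuous_id.sub continuous_const)
              · exact φ.hasCompactSupport_normed.comp_homeomorph (Homeomorph.subRight t))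
            (Filter.Eventually.of_forall fun z => ρnn _)]
        rw [this, integral_sub_right_eq_self ρ t, φ.integral_normed, ENNReal.ofReal_one, mul_one]
    _ = ENNReal.ofReal (∫ t, h t) := by
        rw [MeasureTheory.ofReal_integral_eq_lintegral_ofReal hint
          (Filter.Eventually.of_forall hpos)]

lemma moll (φ : ContDiffBump (0 : En n)) {u : En n → ℝ} {g : En n → (En n →L[ℝ] ℝ)}
    (hu : Integrable u) (hg : Integrable fun x => ‖g x‖) (hw : IsWeakGrad u g) :
    ∃ uε : En n → ℝ, ContDiff ℝ 1 uε ∧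
      (∀ z, |uε z| ≤ ∫ t, φ.normed volume (z - t) * |u t|) ∧
      (∀ z, ‖fderiv ℝ uε z‖ ≤ ∫ t, φ.normed volume (z - t) * ‖g t‖) ∧
      (∀ (V : Set (En n)) (y : En n), ball y φ.rOut ⊆ V → (∀ t ∈ V, 1 ≤ u t) → 1 ≤ uε y) := by
  set ρ := φ.normed volume with hρdef
  have ρc : Continuous ρ := φ.continuous_normed
  have ρnn : ∀ y, 0 ≤ ρ y := φ.nonneg_normed
  have ρcd : ∀ m : ℕ∞, ContDiff ℝ m ρ := fun m => φ.contDiff_normed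
  have ρcs : HasCompactSupport ρ := φ.hasCompactSupport_normed
  obtain ⟨M, hM⟩ := ρc.bounded_above_of_compact_support ρcs
  set L : ℝ →L[ℝ] ℝ →L[ℝ] ℝ := ContinuousLinearMap.mul ℝ ℝ with hL
  set uε : En n → ℝ := u ⋆[L, volume] ρ with huε
  have uεdef : ∀ z, uε z = ∫ t, u t * ρ (z - t) := fun z => rfl
  have shift_int : ∀ z : En n, Integrable (fun t => ρ (z - t)) := by
    intro z
    apply Continuous.integrable_of_hasCompactSupport
    · exact ρc.comp (continuous_const.sub continuous_id)
    · exact ρcs.comp_homeomorph (Homeomorph.subLeft z)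
  have contshift : ∀ z : En n, Continuous fun t : En n => ρ (z - t) := fun z =>
    ρc.comp (continuous_const.sub continuous_id)
  have conv_int : ∀ z : En n, Integrable (fun t => u t * ρ (z - t)) := by
    intro z
    have h1 : Integrable (fun t => ρ (z - t) * u t) :=
      hu.bdd_mul (contshift z).aestronglyMeasurable (Filter.Eventually.of_forall fun t => hM _)
    simpa [mul_comm] using h1
  refine ⟨uε, ?_, ?_, ?_, ?_⟩
  · exact ρcs.contDiff_convolution_right L hu.locallyIntegrable (ρcd 1)
  · intro z
    rw [uεdef]
    calc |∫ t, u t * ρ (z - t)| ≤ ∫ t, |u t| * |ρ (z - t)| := by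
          simpa [Real.norm_eq_abs, abs_mul] using
            norm_integral_le_integral_norm (μ := volume) (fun t => u t * ρ (z - t))
      _ = ∫ t, ρ (z - t) * |u t| := by
          congr 1; ext t; rw [abs_of_nonneg (ρnn _), mul_comm]
  · intro z
    -- derivative formula
    have hder : HasFDerivAt uε ((u ⋆[L.precompR (En n), volume] fderiv ℝ ρ) z) z :=
      ρcs.hasFDerivAt_convolution_right L hu.locallyIntegrable (ρcd 1) z
    have hfd := hder.fderiv
    have happ : ∀ v : En n, fderiv ℝ uε z v = ∫ t, u t * (fderiv ℝ ρ (z - t) v) := by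
      intro v
      rw [hfd, convolution_precompR_apply L hu.locallyIntegrable (ρcs.fderiv ℝ)
        ((ρcd 2).continuous_fderiv (by norm_num)) z v]
      rfl
    -- weak gradient identity
    have hweak : ∀ v : En n, ∫ t, u t * (fderiv ℝ ρ (z - t) v) = ∫ t, ρ (z - t) * g t v := by
      intro v
      have φz_cd : ContDiff ℝ 1 (fun y => ρ (z - y)) :=
        (ρcd 1).comp (contDiff_const.sub contDiff_id)
      have φz_cs : HasCompactSupport (fun y => ρ (z - y)) :=
        ρcs.comp_homeomorph (Homeomorph.subLeft z)
      have hfd2 : ∀ y : En n, fderiv ℝ (fun y => ρ (z - y)) y = -(fderiv ℝ ρ (z - y)) := by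
        intro y
        have h1 : HasFDerivAt (fun y : En n => z - y) (-(ContinuousLinearMap.id ℝ (En n))) y :=
          (hasFDerivAt_id y).const_sub z
        have h2 : HasFDerivAt ρ (fderiv ℝ ρ (z - y)) (z - y) :=
          (((ρcd 1).differentiable (by simp)) (z - y)).hasFDerivAt
        have h4 : HasFDerivAt (fun y : En n => ρ (z - y))
            ((fderiv ℝ ρ (z - y)).comp (-(ContinuousLinearMap.id ℝ (En n)))) y := h2.comp y h1
        rw [h4.fderiv]
        ext v
        simp
      have hid := hw (fun y => ρ (z - y)) φz_cd φz_cs v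
      simp_rw [hfd2] at hid
      have h5 : ∫ t, u t * (-fderiv ℝ ρ (z - t)) v = -∫ t, u t * fderiv ℝ ρ (z - t) v := by
        rw [← integral_neg]; congr 1; ext t
        simp [ContinuousLinearMap.neg_apply]
      rw [h5] at hid
      exact neg_injective hid
  -- norm bound
    have hnn : 0 ≤ ∫ t, ρ (z - t) * ‖g t‖ :=
      integral_nonneg fun t => mul_nonneg (ρnn _) (norm_nonneg _)
    apply ContinuousLinearMap.opNorm_le_bound _ hnn
    intro v
    rw [happ, hweak]
    calc ‖∫ t, ρ (z - t) * g t v‖ ≤ ∫ t, ‖ρ (z - t) * g t v‖ :=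
          norm_integral_le_integral_norm _
      _ ≤ ∫ t, (ρ (z - t) * ‖g t‖) * ‖v‖ := by
          apply integral_mono_of_nonneg (Filter.Eventually.of_forall fun t => norm_nonneg _)
          · have : Integrable (fun t => ρ (z - t) * ‖g t‖) := by
              exact hg.bdd_mul ((ρc.comp (continuous_const.sub continuous_id)).aestronglyMeasurable)
                (Filter.Eventually.of_forall fun t => hM _)
            exact this.mul_const ‖v‖
          · apply Filter.Eventually.of_forall
            intro t
            show ‖ρ (z - t) * g t v‖ ≤ ρ (z - t) * ‖g t‖ * ‖v‖
            rw [norm_mul, Real.norm_of_nonneg (ρnn _), mul_assoc]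
            exact mul_le_mul_of_nonneg_left ((g t).le_opNorm v) (ρnn _)
      _ = (∫ t, ρ (z - t) * ‖g t‖) * ‖v‖ := by rw [integral_mul_const]
  · intro V y hball hV
    rw [uεdef]
    have h1 : ∫ t, ρ (y - t) = 1 := by
      rw [integral_sub_left_eq_self ρ volume y]; exact φ.integral_normed
    rw [show (1 : ℝ) = ∫ t, ρ (y - t) from h1.symm]
    apply integral_mono (shift_int y) (conv_int y)
    intro t
    rcases eq_or_lt_of_le (ρnn (y - t)) with h | h
    · show ρ (y - t) ≤ u t * ρ (y - t)
      simp [show ρ (y - t) = 0 from h.symm]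
    · have hmem : y - t ∈ Function.support ρ := fun h0 => h.ne' h0
      rw [φ.support_normed_eq] at hmem
      have : t ∈ ball y φ.rOut := by
        rw [mem_ball, dist_comm, dist_eq_norm]
        simpa [mem_ball, dist_eq_norm] using hmem
      have hu1 : 1 ≤ u t := hV t (hball this)
      show ρ (y - t) ≤ u t * ρ (y - t)
      calc ρ (y - t) = 1 * ρ (y - t) := (one_mul _).symm
        _ ≤ u t * ρ (y - t) := mul_le_mul_of_nonneg_right hu1 (le_of_lt h)

lemma ofReal_norm_eq_coe_nnnorm {E : Type*} [SeminormedAddCommGroup E] (a : E) :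
    ENNReal.ofReal ‖a‖ = (‖a‖₊ : ℝ≥0∞) :=
  ENNReal.ofReal_eq_coe_nnreal (norm_nonneg a)

lemma keyeps (hn : 2 ≤ n) : ∃ C : ℝ≥0∞, C ≠ 0 ∧ C ≠ ∞ ∧
    ∀ (x₀ : En n) (V : Set (En n)) (u : En n → ℝ) (g : En n → (En n →L[ℝ] ℝ)),
      Integrable u → (Integrable fun x => ‖g x‖) → IsWeakGrad u g →
      (∀ y ∈ V, 1 ≤ u y) →
      ∀ (F : Set (En n)) (ε : ℝ), 0 < ε → (∀ y ∈ F, ball y ε ⊆ V) → F ⊆ ball x₀ 1 →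
      volume F ≤ (C * ENNReal.ofReal ((∫ x, |u x|) + ∫ x, ‖g x‖)) ^ ((n : ℝ) / ((n : ℝ) - 1)) := by
  haveI : Nonempty (Fin n) := ⟨⟨0, by omega⟩⟩
  -- the cutoff bump and its derivative bound
  set ψ : ContDiffBump (0 : En n) := ⟨1, 2, one_pos, one_lt_two⟩ with hψdef
  have ψcd1 : ContDiff ℝ 1 (fun y : En n => ψ y) := ψ.contDiff
  obtain ⟨K₀, hK₀⟩ :=
    ((ψcd1.continuous_fderiv one_ne_zero)).bounded_above_of_compact_support
      (ψ.hasCompactSupport.fderiv (𝕜 := ℝ))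
  set K : ℝ := max K₀ 0 with hKdef
  have hK : ∀ y : En n, ‖fderiv ℝ (fun y : En n => ψ y) y‖ ≤ K :=
    fun y => (hK₀ y).trans (le_max_left _ _)
  have hKnn : 0 ≤ K := le_max_right _ _
  -- the conjugate exponent
  have h1n : (1 : ℝ≥0) < (n : ℝ≥0) := by exact_mod_cast (by omega : 1 < n)
  set q : ℝ≥0 := NNReal.conjExponent n with hqdef
  have hq : NNReal.HolderConjugate n q := NNReal.HolderConjugate.conjExponent h1n
  have hqr : Real.HolderConjugate (n : ℝ) (q : ℝ) := by exact_mod_cast hq.coe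
  have hq_eq : (q : ℝ) = (n : ℝ) / ((n : ℝ) - 1) := hqr.conjugate_eq
  have hqpos : 0 < (q : ℝ) := hqr.symm.pos
  set CS : ℝ≥0∞ := (eLpNormLESNormFDerivOneConst (volume : Measure (En n)) q : ℝ≥0∞) with hCS
  refine ⟨(CS + 1) * (ENNReal.ofReal K + 1), ?_, ?_, ?_⟩
  · exact mul_ne_zero (by simp) (by simp)
  · exact ENNReal.mul_ne_top (by simp [hCS]) (by simp)
  intro x₀ V u g hu hg hw hV1 F ε hε hF1 hF2
  set c : ℝ≥0∞ := ENNReal.ofReal ((∫ x, |u x|) + ∫ x, ‖g x‖) with hc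
  -- mollification
  set φε : ContDiffBump (0 : En n) := ⟨ε / 2, ε, half_pos hε, half_lt_self hε⟩ with hφε
  obtain ⟨uε, uεcd, uεabs, uεgrad, uεone⟩ := moll φε hu hg hw
  -- the cutoff
  set χ : En n → ℝ := fun y => ψ (y - x₀) with hχ
  have χcd : ContDiff ℝ 1 χ := ψcd1.comp (contDiff_id.sub contDiff_const)
  have χcs : HasCompactSupport χ :=
    ψ.hasCompactSupport.comp_homeomorph (Homeomorph.subRight x₀)
  have χ1 : ∀ y ∈ ball x₀ 1, χ y = 1 := by
    intro y hy
    apply ψ.one_of_mem_closedBall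
    have : dist y x₀ < 1 := mem_ball.mp hy
    simp only [mem_closedBall, dist_zero_right]
    rw [← dist_eq_norm]
    exact le_of_lt (by simpa [hψdef] using this)
  have χder : ∀ y, HasFDerivAt χ (fderiv ℝ (fun y : En n => ψ y) (y - x₀)) y := by
    intro y
    have h1 : HasFDerivAt (fun y : En n => y - x₀) (ContinuousLinearMap.id ℝ (En n)) y :=
      (hasFDerivAt_id y).sub_const x₀
    have h2 : HasFDerivAt (fun y : En n => ψ y)
        (fderiv ℝ (fun y : En n => ψ y) (y - x₀)) (y - x₀) :=
      ((ψcd1.differentiable one_ne_zero) (y - x₀)).hasFDerivAt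
    have := h2.comp y h1
    simp only [ContinuousLinearMap.comp_id] at this
    exact this
  -- the compactly supported test function
  set w : En n → ℝ := fun z => uε z * χ z with hwdef
  have wcd : ContDiff ℝ 1 w := uεcd.mul χcd
  have wcs : HasCompactSupport w := χcs.mul_left
  have wder : ∀ z, ‖fderiv ℝ w z‖ ≤ K * |uε z| + ‖fderiv ℝ uε z‖ := by
    intro z
    have h1 : HasFDerivAt w
        (uε z • fderiv ℝ (fun y : En n => ψ y) (z - x₀) + χ z • fderiv ℝ uε z) z :=
      HasFDerivAt.mul ((uεcd.differentiable one_ne_zero z).hasFDerivAt) (χder z)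
    rw [h1.fderiv]
    calc ‖uε z • fderiv ℝ (fun y : En n => ψ y) (z - x₀) + χ z • fderiv ℝ uε z‖
        ≤ ‖uε z • fderiv ℝ (fun y : En n => ψ y) (z - x₀)‖ + ‖χ z • fderiv ℝ uε z‖ :=
          norm_add_le _ _
      _ ≤ |uε z| * K + 1 * ‖fderiv ℝ uε z‖ := by
          rw [norm_smul, norm_smul]
          gcongr
          · exact (Real.norm_eq_abs _).le
          · exact hK _
          · rw [Real.norm_eq_abs, abs_of_nonneg ψ.nonneg]
            exact ψ.le_one
      _ = K * |uε z| + ‖fderiv ℝ uε z‖ := by ring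
  -- L¹ bound for the derivative of w
  have young_u := young_conv φε (fun t => |u t|) hu.abs (fun t => abs_nonneg _)
  have young_g := young_conv φε (fun t => ‖g t‖) hg (fun t => norm_nonneg _)
  have bound_uε : (∫⁻ z, (‖uε z‖₊ : ℝ≥0∞)) ≤ ENNReal.ofReal (∫ x, |u x|) := by
    refine le_trans (lintegral_mono fun z => ?_) young_u
    rw [← ofReal_norm_eq_coe_nnnorm, Real.norm_eq_abs]
    exact ENNReal.ofReal_le_ofReal (uεabs z)
  have bound_duε : (∫⁻ z, (‖fderiv ℝ uε z‖₊ : ℝ≥0∞)) ≤ ENNReal.ofReal (∫ x, ‖g x‖) := by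
    refine le_trans (lintegral_mono fun z => ?_) young_g
    rw [← ofReal_norm_eq_coe_nnnorm]
    exact ENNReal.ofReal_le_ofReal (uεgrad z)
  have hint_u : 0 ≤ ∫ x, |u x| := integral_nonneg fun x => abs_nonneg _
  have hint_g : 0 ≤ ∫ x, ‖g x‖ := integral_nonneg fun x => norm_nonneg _
  have ineq2 : (∫⁻ z, (‖fderiv ℝ w z‖₊ : ℝ≥0∞)) ≤ (ENNReal.ofReal K + 1) * c := by
    have muε : Measurable fun z => (‖uε z‖₊ : ℝ≥0∞) :=
      uεcd.continuous.measurable.nnnorm.coe_nnreal_ennreal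
    have mduε : Measurable fun z => (‖fderiv ℝ uε z‖₊ : ℝ≥0∞) :=
      (uεcd.continuous_fderiv one_ne_zero).measurable.nnnorm.coe_nnreal_ennreal
    calc (∫⁻ z, (‖fderiv ℝ w z‖₊ : ℝ≥0∞))
        ≤ ∫⁻ z, (ENNReal.ofReal K * (‖uε z‖₊ : ℝ≥0∞) + (‖fderiv ℝ uε z‖₊ : ℝ≥0∞)) := by
          apply lintegral_mono
          intro z
          show (‖fderiv ℝ w z‖₊ : ℝ≥0∞)
              ≤ ENNReal.ofReal K * (‖uε z‖₊ : ℝ≥0∞) + (‖fderiv ℝ uε z‖₊ : ℝ≥0∞)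
          rw [← ofReal_norm_eq_coe_nnnorm]
          calc ENNReal.ofReal ‖fderiv ℝ w z‖
              ≤ ENNReal.ofReal (K * |uε z| + ‖fderiv ℝ uε z‖) :=
                ENNReal.ofReal_le_ofReal (wder z)
            _ ≤ ENNReal.ofReal (K * |uε z|) + ENNReal.ofReal ‖fderiv ℝ uε z‖ :=
                ENNReal.ofReal_add_le
            _ = ENNReal.ofReal K * (‖uε z‖₊ : ℝ≥0∞) + (‖fderiv ℝ uε z‖₊ : ℝ≥0∞) := by
                rw [ENNReal.ofReal_mul hKnn, ← ofReal_norm_eq_coe_nnnorm,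
                  ← ofReal_norm_eq_coe_nnnorm, Real.norm_eq_abs]
      _ = ENNReal.ofReal K * (∫⁻ z, (‖uε z‖₊ : ℝ≥0∞)) + ∫⁻ z, (‖fderiv ℝ uε z‖₊ : ℝ≥0∞) := by
          rw [lintegral_add_left (muε.const_mul _), lintegral_const_mul _ muε]
      _ ≤ ENNReal.ofReal K * ENNReal.ofReal (∫ x, |u x|) + ENNReal.ofReal (∫ x, ‖g x‖) := by
          gcongr
      _ ≤ (ENNReal.ofReal K + 1) * c := by
          rw [hc, ENNReal.ofReal_add hint_u hint_g, add_mul, one_mul, mul_add]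
          calc ENNReal.ofReal K * ENNReal.ofReal (∫ x, |u x|) + ENNReal.ofReal (∫ x, ‖g x‖)
              ≤ (ENNReal.ofReal K * ENNReal.ofReal (∫ x, |u x|)
                  + ENNReal.ofReal K * ENNReal.ofReal (∫ x, ‖g x‖))
                + (ENNReal.ofReal (∫ x, |u x|) + ENNReal.ofReal (∫ x, ‖g x‖)) := by
                refine add_le_add le_self_add le_add_self
            _ = _ := by ring
  -- Sobolev inequality
  have hfin : ((Module.finrank ℝ (En n) : ℝ≥0)) = (n : ℝ≥0) := by rw [finrank_euclideanSpace_fin]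
  have sob : eLpNorm w q volume ≤ CS * eLpNorm (fderiv ℝ w) 1 volume :=
    eLpNorm_le_eLpNorm_fderiv_one (μ := (volume : Measure (En n))) wcd wcs
      (p := q) (by rw [hfin]; exact hq)
  -- lower bound for the Lᑫ norm of w
  have wge : ∀ z ∈ F, 1 ≤ w z := by
    intro z hz
    have h1 : χ z = 1 := χ1 z (hF2 hz)
    have h2 : 1 ≤ uε z := uεone V z (hF1 z hz) hV1
    simpa [hwdef, h1] using h2
  have lower : volume F ≤ (eLpNorm w q volume) ^ (q : ℝ) := by
    have hS : MeasurableSet {z : En n | 1 ≤ w z} :=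
      measurableSet_le measurable_const wcd.continuous.measurable
    have hsub : F ⊆ {z : En n | 1 ≤ w z} := fun z hz => wge z hz
    have h1 : ∀ z ∈ {z : En n | 1 ≤ w z}, (1 : ℝ≥0∞) ≤ (‖w z‖₊ : ℝ≥0∞) ^ (q : ℝ) := by
      intro z hz
      have : (1 : ℝ≥0∞) ≤ (‖w z‖₊ : ℝ≥0∞) := by
        rw [← ofReal_norm_eq_coe_nnnorm, ← ENNReal.ofReal_one]
        exact ENNReal.ofReal_le_ofReal ((le_trans hz (le_abs_self _)).trans_eq
          (Real.norm_eq_abs _).symm)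
      calc (1 : ℝ≥0∞) = 1 ^ (q : ℝ) := (ENNReal.one_rpow _).symm
        _ ≤ (‖w z‖₊ : ℝ≥0∞) ^ (q : ℝ) := ENNReal.rpow_le_rpow this hqpos.le
    calc volume F ≤ volume {z : En n | 1 ≤ w z} := measure_mono hsub
      _ = ∫⁻ z in {z : En n | 1 ≤ w z}, 1 := by rw [setLIntegral_one]
      _ ≤ ∫⁻ z in {z : En n | 1 ≤ w z}, (‖w z‖₊ : ℝ≥0∞) ^ (q : ℝ) :=
          setLIntegral_mono (wcd.continuous.measurable.nnnorm.coe_nnreal_ennreal.pow_const _) h1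
      _ ≤ ∫⁻ z, (‖w z‖₊ : ℝ≥0∞) ^ (q : ℝ) := setLIntegral_le_lintegral _ _
      _ = (eLpNorm w q volume) ^ (q : ℝ) := by
          rw [eLpNorm_eq_lintegral_rpow_enorm_toReal (by exact_mod_cast hq.symm.pos.ne')
            ENNReal.coe_ne_top]
          rw [ENNReal.coe_toReal, one_div, ← ENNReal.rpow_mul,
            inv_mul_cancel₀ hqpos.ne', ENNReal.rpow_one]
          rfl
  calc volume F ≤ (eLpNorm w q volume) ^ (q : ℝ) := lower
    _ ≤ (CS * ((ENNReal.ofReal K + 1) * c)) ^ (q : ℝ) := by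
        apply ENNReal.rpow_le_rpow _ hqpos.le
        refine le_trans sob ?_
        rw [eLpNorm_one_eq_lintegral_enorm]
        exact mul_le_mul_right ineq2 CS
    _ ≤ (((CS + 1) * (ENNReal.ofReal K + 1)) * c) ^ (q : ℝ) := by
        apply ENNReal.rpow_le_rpow _ hqpos.le
        rw [← mul_assoc]
        gcongr
        exact le_self_add
    _ = ((CS + 1) * (ENNReal.ofReal K + 1) * c) ^ ((n : ℝ) / ((n : ℝ) - 1)) := by
        rw [hq_eq]

lemma key (hn : 2 ≤ n) : ∃ C : ℝ≥0∞, C ≠ 0 ∧ C ≠ ∞ ∧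
    ∀ (x₀ : En n) (V : Set (En n)) (u : En n → ℝ) (g : En n → (En n →L[ℝ] ℝ)),
      Integrable u → (Integrable fun x => ‖g x‖) → IsWeakGrad u g →
      IsOpen V → V ⊆ ball x₀ 1 → (∀ y ∈ V, 1 ≤ u y) →
      volume V ≤ (C * ENNReal.ofReal ((∫ x, |u x|) + ∫ x, ‖g x‖)) ^ ((n : ℝ) / ((n : ℝ) - 1)) := by
  obtain ⟨C, hC0, hCt, hC⟩ := keyeps hn
  refine ⟨C, hC0, hCt, ?_⟩
  intro x₀ V u g hu hg hw hVo hVb hV1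
  set F : ℕ → Set (En n) := fun k => {y | ((k : ℝ) + 1)⁻¹ ≤ infDist y Vᶜ} ∩ V with hF
  have hmono : Monotone F := by
    intro k l hkl y hy
    have h1 : ((l : ℝ) + 1)⁻¹ ≤ ((k : ℝ) + 1)⁻¹ := by
      have : (k : ℝ) ≤ (l : ℝ) := by exact_mod_cast hkl
      gcongr
    exact ⟨le_trans h1 hy.1, hy.2⟩
  have hcompl : (Vᶜ : Set (En n)).Nonempty := by
    set v : En n := EuclideanSpace.single (⟨0, by omega⟩ : Fin n) (2 : ℝ) with hv
    refine ⟨x₀ + v, fun hmem => ?_⟩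
    have h1 : dist (x₀ + v) x₀ = 2 := by
      rw [dist_eq_norm, add_sub_cancel_left, hv, EuclideanSpace.norm_single]
      norm_num
    have := mem_ball.mp (hVb hmem)
    rw [h1] at this
    norm_num at this
  have hcover : V ⊆ ⋃ k, F k := by
    intro y hy
    have h0 : 0 < infDist y Vᶜ := by
      rw [← (hVo.isClosed_compl.notMem_iff_infDist_pos hcompl)]
      simpa using hy
    obtain ⟨k, hk⟩ := exists_nat_gt (infDist y Vᶜ)⁻¹
    refine mem_iUnion.mpr ⟨k, ⟨?_, hy⟩⟩
    show ((k : ℝ) + 1)⁻¹ ≤ infDist y Vᶜ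
    rw [inv_le_comm₀ (by positivity) h0]
    exact le_of_lt (lt_trans hk (by linarith))
  have hball : ∀ k, ∀ y ∈ F k, ball y ((k : ℝ) + 1)⁻¹ ⊆ V := by
    intro k y hy z hz
    by_contra hzV
    have h1 : infDist y Vᶜ ≤ dist y z := infDist_le_dist_of_mem hzV
    have h2 : dist y z < ((k : ℝ) + 1)⁻¹ := by rw [dist_comm]; exact mem_ball.mp hz
    exact absurd (lt_of_le_of_lt (le_trans hy.1 h1) h2) (lt_irrefl _)
  calc volume V ≤ volume (⋃ k, F k) := measure_mono hcover
    _ = ⨆ k, volume (F k) := hmono.measure_iUnion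
    _ ≤ _ := by
        refine iSup_le fun k => ?_
        exact hC x₀ V u g hu hg hw hV1 (F k) _ (by positivity) (hball k)
          (fun y hy => hVb hy.2)


/-- Capacity controls relative measure in small balls: there is a constant `C_I ≥ 1`
(the relative isoperimetric constant, depending only on `n`) such that for `0 < r < 1`
and `A ⊆ B(x,r)`, `|A|/|B(x,r)| ≤ (2 C_I / ω_n) cap₁(A)/r^{n-1}`. -/
theorem cap1_lower_bound_in_small_ball (hn : 2 ≤ n) :
    ∃ C_I : ℝ≥0∞, 1 ≤ C_I ∧ C_I ≠ ∞ ∧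
      ∀ (x : En n) (r : ℝ) (A : Set (En n)), 0 < r → r < 1 → A ⊆ ball x r →
        volume A / volume (ball x r) ≤
          2 * C_I / volume (ball (0 : En n) 1) * (cap1 A / ENNReal.ofReal (r ^ (n - 1))) := by
  haveI : Nonempty (Fin n) := ⟨⟨0, by omega⟩⟩
  haveI : Nontrivial (En n) := by
    refine ⟨EuclideanSpace.single (⟨0, by omega⟩ : Fin n) (1 : ℝ), 0, fun h => ?_⟩
    have h2 := congrArg (fun v : En n => v (⟨0, by omega⟩ : Fin n)) h
    simp [EuclideanSpace.single_apply] at h2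
  obtain ⟨C, hC0, hCt, hC⟩ := key hn
  set ω : ℝ≥0∞ := volume (ball (0 : En n) 1) with hω
  have hω0 : ω ≠ 0 := (measure_ball_pos volume 0 one_pos).ne'
  have hωt : ω ≠ ∞ := measure_ball_lt_top.ne
  set p' : ℝ := (n : ℝ) / ((n : ℝ) - 1) with hp'
  have hn1 : (0 : ℝ) < (n : ℝ) - 1 := by
    have : (2 : ℝ) ≤ (n : ℝ) := by exact_mod_cast hn
    linarith
  have hp'pos : 0 < p' := by positivity
  set CK : ℝ≥0∞ := ω + C ^ p' with hCK
  have hCKt : CK ≠ ∞ :=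
    ENNReal.add_ne_top.mpr ⟨hωt, ENNReal.rpow_ne_top_of_nonneg hp'pos.le hCt⟩
  have hCK0 : CK ≠ 0 := fun h => hω0 (by rw [hCK, add_eq_zero] at h; exact h.1)
  refine ⟨1 + CK, le_add_right le_rfl, by simp [hCKt], ?_⟩
  intro x r A hr hr1 hA
  set W : ℝ≥0∞ := ENNReal.ofReal (r ^ (n - 1)) with hW
  have hW0 : W ≠ 0 := by
    rw [hW]
    simp only [ne_eq, ENNReal.ofReal_eq_zero, not_le]
    positivity
  have hWt : W ≠ ∞ := ENNReal.ofReal_ne_top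
  have hs0 : ENNReal.ofReal r ≠ 0 := by
    simp only [ne_eq, ENNReal.ofReal_eq_zero, not_le]; exact hr
  have hst : ENNReal.ofReal r ≠ ∞ := ENNReal.ofReal_ne_top
  -- ball volume computations
  have hBall : volume (ball x r) = W * ENNReal.ofReal r * ω := by
    rw [Measure.addHaar_ball volume x hr.le]
    congr 1
    rw [hW, ← ENNReal.ofReal_mul (by positivity), ← pow_succ]
    congr 2
    · rw [finrank_euclideanSpace_fin]
      omega
  -- Step 1: each admissible c bounds the measure of A
  have main : ∀ c ∈ { c : ℝ≥0∞ | ∃ u : En n → ℝ, ∃ g : En n → (En n →L[ℝ] ℝ),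
      Integrable u ∧ Integrable (fun x => ‖g x‖) ∧ IsWeakGrad u g ∧
      (∃ V : Set (En n), IsOpen V ∧ A ⊆ V ∧ ∀ x ∈ V, 1 ≤ u x) ∧
      c = ENNReal.ofReal ((∫ x, |u x|) + ∫ x, ‖g x‖) },
      volume A ≤ CK * ENNReal.ofReal r * c := by
    rintro c ⟨u, g, hu, hg, hwg, ⟨V, hVo, hAV, hV1⟩, rfl⟩
    set c : ℝ≥0∞ := ENNReal.ofReal ((∫ x, |u x|) + ∫ x, ‖g x‖) with hc
    have hct : c ≠ ∞ := ENNReal.ofReal_ne_top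
    have hkey := hC x (V ∩ ball x 1) u g hu hg hwg (hVo.inter isOpen_ball)
      inter_subset_right (fun y hy => hV1 y hy.1)
    have hAV' : A ⊆ V ∩ ball x 1 :=
      subset_inter hAV (hA.trans (ball_subset_ball hr1.le))
    have h1 : volume A ≤ (C * c) ^ p' := le_trans (measure_mono hAV') hkey
    by_cases hcW : c ≤ W
    · by_cases hc0 : c = 0
      · have hA0 : volume A = 0 := by
          rw [hc0] at h1
          simpa [ENNReal.zero_rpow_of_pos hp'pos] using h1
        simp [hA0]
      · have hp'1 : p' = 1 + 1 / ((n : ℝ) - 1) := by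
          rw [hp']
          field_simp
          ring
      -- (C*c)^p' = C^p' * (c * c^(1/(n-1)))
        have h2 : (C * c) ^ p' = C ^ p' * (c * c ^ (1 / ((n : ℝ) - 1))) := by
          rw [ENNReal.mul_rpow_of_nonneg _ _ hp'pos.le]
          congr 1
          rw [hp'1, ENNReal.rpow_add _ _ hc0 hct, ENNReal.rpow_one]
        have h3 : c ^ (1 / ((n : ℝ) - 1)) ≤ ENNReal.ofReal r := by
          calc c ^ (1 / ((n : ℝ) - 1)) ≤ W ^ (1 / ((n : ℝ) - 1)) :=
                ENNReal.rpow_le_rpow hcW (by positivity)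
            _ = ENNReal.ofReal r := by
                rw [hW, show r ^ (n - 1) = r ^ ((n : ℝ) - 1) by
                    rw [← Real.rpow_natCast r (n - 1), Nat.cast_sub (by omega), Nat.cast_one]]
                rw [ENNReal.ofReal_rpow_of_nonneg (by positivity) (by positivity)]
                rw [← Real.rpow_mul hr.le]
                rw [show ((n : ℝ) - 1) * (1 / ((n : ℝ) - 1)) = 1 by field_simp]
                rw [Real.rpow_one]
        calc volume A ≤ (C * c) ^ p' := h1
          _ = C ^ p' * (c * c ^ (1 / ((n : ℝ) - 1))) := h2
          _ ≤ C ^ p' * (c * ENNReal.ofReal r) := by gcongr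
          _ = C ^ p' * ENNReal.ofReal r * c := by ring
          _ ≤ CK * ENNReal.ofReal r * c := by
              gcongr
              exact le_add_self
    · have h4 : volume A ≤ W * ENNReal.ofReal r * ω := (measure_mono hA).trans_eq hBall
      calc volume A ≤ W * ENNReal.ofReal r * ω := h4
        _ = ω * ENNReal.ofReal r * W := by ring
        _ ≤ ω * ENNReal.ofReal r * c := by
            gcongr
            exact (not_le.mp hcW).le
        _ ≤ CK * ENNReal.ofReal r * c := by
            gcongr
            exact le_self_add
  -- Step 2: pass to the infimum
  have main2 : volume A ≤ CK * ENNReal.ofReal r * cap1 A := by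
    set X : ℝ≥0∞ := CK * ENNReal.ofReal r with hX
    have hX0 : X ≠ 0 := mul_ne_zero hCK0 hs0
    have hXt : X ≠ ∞ := ENNReal.mul_ne_top hCKt hst
    have hdiv : volume A / X ≤ cap1 A := by
      apply le_sInf
      intro c hc
      exact (ENNReal.div_le_iff_le_mul (Or.inl hX0) (Or.inl hXt)).mpr
        (by rw [mul_comm]; exact main c hc)
    calc volume A = volume A / X * X := (ENNReal.div_mul_cancel hX0 hXt).symm
      _ ≤ cap1 A * X := mul_le_mul_left hdiv X
      _ = X * cap1 A := mul_comm _ _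
  -- Step 3: final algebra
  have main3 : volume A ≤ 2 * (1 + CK) * cap1 A * ENNReal.ofReal r := by
    calc volume A ≤ CK * ENNReal.ofReal r * cap1 A := main2
      _ = CK * cap1 A * ENNReal.ofReal r := by ring
      _ ≤ 2 * (1 + CK) * cap1 A * ENNReal.ofReal r := by
          gcongr
          calc CK ≤ 1 + CK := le_add_self
            _ ≤ 2 * (1 + CK) := by
                rw [two_mul]
                exact le_self_add
  rw [hBall]
  have hRHS : 2 * (1 + CK) / ω * (cap1 A / W) = 2 * (1 + CK) * cap1 A / (W * ω) := by
    simp only [div_eq_mul_inv]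
    rw [ENNReal.mul_inv (Or.inl hW0) (Or.inl hWt)]
    ring
  rw [hRHS]
  calc volume A / (W * ENNReal.ofReal r * ω)
      ≤ 2 * (1 + CK) * cap1 A * ENNReal.ofReal r / (W * ENNReal.ofReal r * ω) := by
        gcongr
    _ = 2 * (1 + CK) * cap1 A / (W * ω) := by
        rw [show W * ENNReal.ofReal r * ω = W * ω * ENNReal.ofReal r by ring]
        exact ENNReal.mul_div_mul_right _ _ hs0 hst


end
end

section
/- Let f: Ω → Ω' be a homeomorphism between open subsets of ℝ^n, and define J_f(x) := limsup_{r→0} |f(B(x,r))|/|B(x,r)|. Then ∫_Ω J_f dℒ^n ≤ |f(Ω)|. -/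
open MeasureTheory Metric Set Filter ENNReal Topology

noncomputable section

variable {n : ℕ}

/-- For a homeomorphism `f : Ω → Ω'`, the volume derivative `J_f` satisfies
`∫_Ω J_f dℒⁿ ≤ |f(Ω)|`. -/
theorem lintegral_Jvol_le (hn : 2 ≤ n) (Ω Ω' : Set (En n)) (hΩ : IsOpen Ω) (hΩ' : IsOpen Ω')
    (f : En n → En n) (hcont : ContinuousOn f Ω) (hinj : InjOn f Ω) (himg : f '' Ω = Ω')
    (hopen : ∀ V ⊆ Ω, IsOpen V → IsOpen (f '' V)) :
    ∫⁻ x in Ω, Jvol f x ≤ volume (f '' Ω) := by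
  rcases eq_or_ne (volume (f '' Ω)) ⊤ with htop | htop
  · simp [htop]
  haveI : Nontrivial (En n) := by
    have : Nonempty (Fin n) := ⟨⟨0, by omega⟩⟩
    infer_instance
  -- the embedding F : Ω → En n
  set F : Ω → En n := fun x => f x with hF
  have hFcont : Continuous F := hcont.restrict
  have hFinj : Function.Injective F := fun a b h => Subtype.ext (hinj a.2 b.2 h)
  have hFopen : IsOpenMap F := by
    intro U hU
    rcases isOpen_induced_iff.1 hU with ⟨V, hV, rfl⟩
    have : F '' (Subtype.val ⁻¹' V) = f '' (V ∩ Ω) := by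
      ext y; simp only [hF, Set.mem_image, mem_inter_iff]
      constructor
      · rintro ⟨⟨x, hx⟩, hxV, rfl⟩; exact ⟨x, ⟨hxV, hx⟩, rfl⟩
      · rintro ⟨x, ⟨hxV, hx⟩, rfl⟩; exact ⟨⟨x, hx⟩, hxV, rfl⟩
    rw [this]
    exact hopen (V ∩ Ω) inter_subset_right (hV.inter hΩ)
  have hemb : IsOpenEmbedding F :=
    IsOpenEmbedding.of_continuous_injective_isOpenMap hFcont hFinj hFopen
  have hme : MeasurableEmbedding F := hemb.measurableEmbedding
  -- the pullback measure ρ A = volume (f '' (A ∩ Ω))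
  set ρ : Measure (En n) := Measure.map (Subtype.val : Ω → En n) (Measure.comap F volume)
    with hρdef
  have himgeq : ∀ A : Set (En n), F '' (Subtype.val ⁻¹' A) = f '' (A ∩ Ω) := by
    intro A; ext y; simp only [hF, Set.mem_image, mem_inter_iff, Set.mem_preimage]
    constructor
    · rintro ⟨⟨x, hx⟩, hxA, rfl⟩; exact ⟨x, ⟨hxA, hx⟩, rfl⟩
    · rintro ⟨x, ⟨hxA, hx⟩, rfl⟩; exact ⟨⟨x, hx⟩, hxA, rfl⟩
  have hρ : ∀ A : Set (En n), MeasurableSet A → ρ A = volume (f '' (A ∩ Ω)) := by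
    intro A hA
    rw [hρdef, Measure.map_apply measurable_subtype_coe hA, hme.comap_apply, himgeq]
  have hρuniv : ρ Set.univ = volume (f '' Ω) := by
    rw [hρ _ MeasurableSet.univ, Set.univ_inter]
  haveI : IsFiniteMeasure ρ := ⟨by rw [hρuniv]; exact lt_top_iff_ne_top.2 htop⟩
  -- Besicovitch differentiation
  have hbes := Besicovitch.ae_tendsto_rnDeriv ρ (volume : Measure (En n))
  -- pointwise bound on Ω
  have hae : ∀ᵐ x ∂(volume.restrict Ω), Jvol f x ≤ ρ.rnDeriv volume x := by
    rw [ae_restrict_iff' hΩ.measurableSet]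
    filter_upwards [hbes] with x hx hxΩ
    have hlim : Filter.limsup (fun r => ρ (closedBall x r) / volume (closedBall x r))
        (𝓝[>] (0:ℝ)) = ρ.rnDeriv volume x := hx.limsup_eq
    rw [Jvol, ← hlim]
    apply limsup_le_limsup
    · rcases Metric.isOpen_iff.1 hΩ x hxΩ with ⟨ε, hε, hball⟩
      filter_upwards [Ioo_mem_nhdsGT_of_mem ⟨le_refl (0:ℝ), hε⟩] with r hr
      have hsub : ball x r ⊆ Ω := fun y hy => hball (mem_ball.2 (lt_trans (mem_ball.1 hy) hr.2))
      have h1 : volume (f '' ball x r) ≤ ρ (closedBall x r) := by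
        rw [hρ _ measurableSet_closedBall]
        apply measure_mono
        apply image_mono
        exact fun y hy => ⟨ball_subset_closedBall hy, hsub hy⟩
      have h2 : volume (closedBall x r) = volume (ball x r) :=
        Measure.addHaar_closedBall_eq_addHaar_ball (μ := volume) x r
      rw [← h2]
      exact ENNReal.div_le_div h1 (le_refl _)
    · exact isCobounded_le_of_bot
    · exact isBounded_le_of_top
  calc ∫⁻ x in Ω, Jvol f x ≤ ∫⁻ x in Ω, ρ.rnDeriv volume x := lintegral_mono_ae hae
    _ ≤ ρ Ω := Measure.setLIntegral_rnDeriv_le Ω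
    _ = volume (f '' Ω) := by rw [hρ _ hΩ.measurableSet, Set.inter_self]

end
end

section
/- Let n ≥ 2 and let L: ℝ^n → ℝ^n be a linear map. Let x ∈ ℝ^n, and let U ⊂ ℝ^n be a set such that lim_{r→0} |B(x,r) \ U|/|B(x,r)| = 0. Then lim_{r→0} diam(L(B(x,r) ∩ U))/r = 2‖L‖, where ‖L‖ = max_{|v|=1} |Lv| is the operator norm. -/
open MeasureTheory Metric Set Filter ENNReal Topology

noncomputable section

variable {n : ℕ}

set_option maxHeartbeats 2000000 in
/-- If `U` has Lebesgue density 1 at `x`, then for a linear map `L`,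
`diam(L(B(x,r) ∩ U))/r → 2‖L‖` as `r → 0`. -/
theorem diam_linear_image_density_one (hn : 2 ≤ n) (L : En n →L[ℝ] En n) (x : En n)
    (U : Set (En n))
    (hU : Tendsto (fun r : ℝ => volume (ball x r \ U) / volume (ball x r)) (𝓝[>] 0) (𝓝 0)) :
    Tendsto (fun r : ℝ => Metric.diam (L '' (ball x r ∩ U)) / r) (𝓝[>] 0) (𝓝 (2 * ‖L‖)) := by
  have hMn : (0:ℝ) ≤ ‖L‖ := norm_nonneg _
  haveI : Nonempty (Fin n) := ⟨⟨0, by omega⟩⟩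
  rw [Metric.tendsto_nhds]
  intro ε hε
  set M : ℝ := ‖L‖ with hMdef
  set η : ℝ := min (ε / (4 * (2 * M + 1))) (1 / 2) with hηdef
  have hηpos : 0 < η := lt_min (by positivity) (by norm_num)
  have hηhalf : η ≤ 1 / 2 := min_le_right _ _
  have hηle : η ≤ ε / (4 * (2 * M + 1)) := min_le_left _ _
  have hηe : 2 * η * (2 * M + 1) ≤ ε / 2 := by
    have h4 : (0:ℝ) < 4 * (2 * M + 1) := by positivity
    have := (le_div_iff₀ h4).mp hηle
    linarith
  -- choose a unit vector nearly attaining the norm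
  obtain ⟨v, hv1, hvL⟩ : ∃ v : En n, ‖v‖ = 1 ∧ M - η ≤ ‖L v‖ := by
    rcases le_or_gt M η with h | h
    · refine ⟨EuclideanSpace.single ⟨0, by omega⟩ (1 : ℝ), ?_, ?_⟩
      · simp
      · have := norm_nonneg (L (EuclideanSpace.single (⟨0, by omega⟩ : Fin n) (1:ℝ)))
        linarith
    · obtain ⟨u, hu1, huL⟩ := L.exists_lt_apply_of_lt_opNorm (show M - η < ‖L‖ by
        rw [← hMdef]; linarith)
      have huLpos : 0 < ‖L u‖ := lt_of_le_of_lt (by linarith) huL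
      have hu0 : u ≠ 0 := by
        intro h0
        rw [h0, map_zero, norm_zero] at huLpos
        exact lt_irrefl _ huLpos
      have hun : 0 < ‖u‖ := norm_pos_iff.mpr hu0
      refine ⟨‖u‖⁻¹ • u, ?_, ?_⟩
      · rw [norm_smul, norm_inv, norm_norm, inv_mul_cancel₀ hun.ne']
      · rw [L.map_smul, norm_smul, norm_inv, norm_norm]
        have hinv : (1:ℝ) ≤ ‖u‖⁻¹ := (one_le_inv₀ hun).mpr hu1.le
        nlinarith [mul_le_mul_of_nonneg_right hinv huLpos.le]
  -- the density hypothesis, quantitatively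
  have hηn : (0:ℝ≥0∞) < ENNReal.ofReal (η ^ n) := ENNReal.ofReal_pos.mpr (by positivity)
  have hev := hU.eventually_lt_const hηn
  filter_upwards [hev, self_mem_nhdsWithin] with r hr hrpos
  simp only [mem_Ioi] at hrpos
  have hηr : 0 < η * r := by positivity
  -- any ball of radius η*r inside ball x r meets U
  have key : ∀ y : En n, ball y (η * r) ⊆ ball x r → (ball y (η * r) ∩ U).Nonempty := by
    intro y hsub
    rw [Set.nonempty_iff_ne_empty]
    intro hempty
    have hdisj : ball y (η * r) ⊆ ball x r \ U := by
      intro z hz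
      refine ⟨hsub hz, fun hzU => ?_⟩
      exact Set.eq_empty_iff_forall_notMem.mp hempty z ⟨hz, hzU⟩
    have h1 : volume (ball y (η * r)) ≤ volume (ball x r \ U) := measure_mono hdisj
    have hb0 : volume (ball x r) ≠ 0 := (measure_ball_pos _ _ hrpos).ne'
    have hbt : volume (ball x r) ≠ ∞ := measure_ball_lt_top.ne
    have h2 : volume (ball x r \ U) < ENNReal.ofReal (η ^ n) * volume (ball x r) :=
      (ENNReal.div_lt_iff (Or.inl hb0) (Or.inl hbt)).mp hr
    have h3 : ENNReal.ofReal (η ^ n) * volume (ball x r) = volume (ball y (η * r)) := by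
      rw [Measure.addHaar_ball volume x hrpos.le, Measure.addHaar_ball volume y hηr.le,
        finrank_euclideanSpace_fin, ← mul_assoc, ← ENNReal.ofReal_mul (by positivity),
        ← mul_pow]
    rw [h3] at h2
    exact absurd (h1.trans_lt h2) (lt_irrefl _)
  -- the two nearly-extremal points
  have hsub : ∀ c : ℝ, |c| = (1 - η) * r →
      ball (x + c • v) (η * r) ⊆ ball x r := by
    intro c hc z hz
    rw [mem_ball] at hz ⊢
    have h1 : dist z x ≤ dist z (x + c • v) + dist (x + c • v) x := dist_triangle _ _ _
    have h2 : dist (x + c • v) x = (1 - η) * r := by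
      rw [dist_eq_norm, add_sub_cancel_left, norm_smul, hv1, mul_one, Real.norm_eq_abs, hc]
    have hη1 : η ≤ 1 := by linarith
    calc dist z x ≤ dist z (x + c • v) + (1 - η) * r := by rw [h2] at h1; exact h1
      _ < η * r + (1 - η) * r := by linarith
      _ = r := by ring
  have habs : |(1 - η) * r| = (1 - η) * r := abs_of_nonneg (by nlinarith)
  have habs' : |-((1 - η) * r)| = (1 - η) * r := by rw [abs_neg]; exact habs
  obtain ⟨z₁, hz₁b, hz₁U⟩ := key (x + ((1 - η) * r) • v) (hsub _ habs)
  obtain ⟨z₂, hz₂b, hz₂U⟩ := key (x + (-((1 - η) * r)) • v) (hsub _ habs')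
  have hz₁ : z₁ ∈ ball x r ∩ U := ⟨hsub _ habs hz₁b, hz₁U⟩
  have hz₂ : z₂ ∈ ball x r ∩ U := ⟨hsub _ habs' hz₂b, hz₂U⟩
  -- upper bound on diameter
  set s : Set (En n) := L '' (ball x r ∩ U) with hs
  have hdub : Metric.diam s ≤ 2 * M * r := by
    apply Metric.diam_le_of_forall_dist_le (by positivity)
    rintro p ⟨a, ha, rfl⟩ q ⟨b, hb, rfl⟩
    have h1 : dist (L a) (L b) ≤ M * dist a b := by
      have := L.lipschitz.dist_le_mul a b
      rwa [coe_nnnorm] at this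
    have h2 : dist a b ≤ 2 * r := by
      have := dist_triangle a x b
      have ha' : dist a x < r := mem_ball.mp ha.1
      have hb' : dist x b < r := by rw [dist_comm]; exact mem_ball.mp hb.1
      linarith
    calc dist (L a) (L b) ≤ M * (2 * r) := h1.trans (by nlinarith)
      _ = 2 * M * r := by ring
  -- boundedness
  have hbdd : Bornology.IsBounded s :=
    L.lipschitz.isBounded_image (Metric.isBounded_ball.subset Set.inter_subset_left)
  -- lower bound on diameter
  have hdlb : r * (2 * M - ε / 2) ≤ Metric.diam s := by
    have hmem : dist (L z₁) (L z₂) ≤ Metric.diam s :=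
      Metric.dist_le_diam_of_mem hbdd ⟨z₁, hz₁, rfl⟩ ⟨z₂, hz₂, rfl⟩
    have hd : dist (L z₁) (L z₂) = ‖L (z₁ - z₂)‖ := by
      rw [dist_eq_norm, ← map_sub]
    -- estimate ‖L (z₁ - z₂)‖ from below
    have hw : ‖z₁ - z₂ - (2 * (1 - η) * r) • v‖ < 2 * (η * r) := by
      have e1 : ‖z₁ - (x + ((1 - η) * r) • v)‖ < η * r := by
        rw [← dist_eq_norm]; exact mem_ball.mp hz₁b
      have e2 : ‖z₂ - (x + (-((1 - η) * r)) • v)‖ < η * r := by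
        rw [← dist_eq_norm]; exact mem_ball.mp hz₂b
      have e3 : z₁ - z₂ - (2 * (1 - η) * r) • v =
          (z₁ - (x + ((1 - η) * r) • v)) - (z₂ - (x + (-((1 - η) * r)) • v)) := by
        have : (2 * (1 - η) * r) • v = ((1 - η) * r) • v - (-((1 - η) * r)) • v := by
          rw [← sub_smul]; congr 1; ring
        rw [this]; abel
      rw [e3]
      calc ‖(z₁ - (x + ((1 - η) * r) • v)) - (z₂ - (x + (-((1 - η) * r)) • v))‖
          ≤ ‖z₁ - (x + ((1 - η) * r) • v)‖ + ‖z₂ - (x + (-((1 - η) * r)) • v)‖ :=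
            norm_sub_le _ _
        _ < 2 * (η * r) := by linarith
    have hw2 : ‖L (z₁ - z₂ - (2 * (1 - η) * r) • v)‖ ≤ M * (2 * (η * r)) := by
      calc ‖L (z₁ - z₂ - (2 * (1 - η) * r) • v)‖
          ≤ M * ‖z₁ - z₂ - (2 * (1 - η) * r) • v‖ := L.le_opNorm _
        _ ≤ M * (2 * (η * r)) := by nlinarith
    have hw3 : ‖L ((2 * (1 - η) * r) • v)‖ = 2 * (1 - η) * r * ‖L v‖ := by
      rw [L.map_smul, norm_smul, Real.norm_eq_abs, abs_of_nonneg (by nlinarith)]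
    have hw4 : ‖L ((2 * (1 - η) * r) • v)‖ - ‖L (z₁ - z₂ - (2 * (1 - η) * r) • v)‖
        ≤ ‖L (z₁ - z₂)‖ := by
      have h1 : ‖L ((2 * (1 - η) * r) • v)‖
          ≤ ‖L (z₁ - z₂)‖ + ‖L (z₁ - z₂ - (2 * (1 - η) * r) • v)‖ := by
        calc ‖L ((2 * (1 - η) * r) • v)‖
            = ‖L (z₁ - z₂) - L (z₁ - z₂ - (2 * (1 - η) * r) • v)‖ := by
              rw [← map_sub]; congr 2; abel
          _ ≤ ‖L (z₁ - z₂)‖ + ‖L (z₁ - z₂ - (2 * (1 - η) * r) • v)‖ := norm_sub_le _ _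
      linarith
    have hLv : 2 * (1 - η) * r * (M - η) ≤ 2 * (1 - η) * r * ‖L v‖ := by
      apply mul_le_mul_of_nonneg_left hvL (by nlinarith)
    have hfinal : r * (2 * M - ε / 2) ≤ ‖L (z₁ - z₂)‖ := by
      have : 2 * (1 - η) * r * (M - η) - M * (2 * (η * r)) ≤ ‖L (z₁ - z₂)‖ := by
        rw [hw3] at hw4; linarith
      nlinarith [this, hrpos.le]
    rw [hd] at hmem
    linarith
  -- conclude
  rw [Real.dist_eq, abs_lt]
  constructor
  · have : (2 * M - ε / 2) ≤ Metric.diam s / r := by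
      rw [le_div_iff₀ hrpos]; linarith [hdlb]
    linarith
  · have : Metric.diam s / r ≤ 2 * M := by
      rw [div_le_iff₀ hrpos]; linarith [hdub]
    linarith

end
end

section
/- Let Ω ⊂ ℝ^n be open, f: Ω → ℝ^n continuous, and x ∈ Ω. Suppose U ∋ x is a set with lim_{r→0} |B(x,r)\U|/|B(x,r)| = 0 such that lim_{U∋y→x, y≠x} |f(y) - f(x) - A(y-x)|/|y-x| = 0 for some linear map A: ℝ^n → ℝ^n. Then limsup_{r→0} diam(f(B(x,r) ∩ U))^n / |B(x,r)| = (2^n/ω_n)·‖A‖^n, where ‖A‖ is the operator (maximum) norm and ω_n = |B(0,1)|. -/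
open MeasureTheory Metric Set Filter ENNReal Topology

noncomputable section

variable {n : ℕ}

lemma exists_opNorm_eq_aux {n : ℕ} (hn : 0 < n) (A : En n →L[ℝ] En n) :
    ∃ v : En n, ‖v‖ = 1 ∧ ‖A v‖ = ‖A‖ := by
  have hv₀n : ‖EuclideanSpace.single (⟨0, hn⟩ : Fin n) (1 : ℝ)‖ = 1 := by
    rw [EuclideanSpace.norm_single]; norm_num
  obtain ⟨v, hv, hmax⟩ := (isCompact_sphere (0 : En n) 1).exists_isMaxOn
    ⟨_, by rw [mem_sphere_zero_iff_norm]; exact hv₀n⟩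
    ((A.continuous.norm).continuousOn)
  rw [mem_sphere_zero_iff_norm] at hv
  refine ⟨v, hv, le_antisymm ?_ ?_⟩
  · calc ‖A v‖ ≤ ‖A‖ * ‖v‖ := A.le_opNorm v
      _ = ‖A‖ := by rw [hv, mul_one]
  · refine A.opNorm_le_bound (norm_nonneg _) fun y => ?_
    rcases eq_or_ne y 0 with rfl | hy
    · simp
    · have hyn : (0:ℝ) < ‖y‖ := norm_pos_iff.2 hy
      have h1 : (‖y‖⁻¹ • y) ∈ sphere (0 : En n) 1 := by
        rw [mem_sphere_zero_iff_norm, norm_smul, norm_inv, norm_norm,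
          inv_mul_cancel₀ hyn.ne']
      have h2 : ‖A (‖y‖⁻¹ • y)‖ ≤ ‖A v‖ := hmax h1
      rw [_root_.map_smul, norm_smul, norm_inv, norm_norm] at h2
      calc ‖A y‖ = ‖y‖ * (‖y‖⁻¹ * ‖A y‖) := by field_simp
        _ ≤ ‖y‖ * ‖A v‖ := mul_le_mul_of_nonneg_left h2 hyn.le
        _ = ‖A v‖ * ‖y‖ := mul_comm _ _

lemma diam_bounds {n : ℕ} (hn : 0 < n) (f : En n → En n) (x : En n)
    (U : Set (En n)) (A : En n →L[ℝ] En n)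
    (hdens : Tendsto (fun r : ℝ => volume (ball x r \ U) / volume (ball x r)) (𝓝[>] 0) (𝓝 0))
    (hdiff : Tendsto (fun y => ‖f y - f x - A (y - x)‖ / ‖y - x‖) (𝓝[U \ {x}] x) (𝓝 0))
    (δ : ℝ) (hδ : 0 < δ) :
    ∀ᶠ r in 𝓝[>] (0:ℝ),
      ENNReal.ofReal ((2 * ‖A‖ - δ) * r) ≤ EMetric.diam (f '' (ball x r ∩ U)) ∧
      EMetric.diam (f '' (ball x r ∩ U)) ≤ ENNReal.ofReal ((2 * ‖A‖ + δ) * r) := by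
  set δ' : ℝ := δ / 4 with hδ'def
  have hδ' : 0 < δ' := by positivity
  have hA0 : (0:ℝ) ≤ ‖A‖ := norm_nonneg _
  -- extract a radius on which the differentiability estimate holds
  have hdiff' : (fun y => ‖f y - f x - A (y - x)‖ / ‖y - x‖) ⁻¹' Iio δ' ∈ 𝓝[U \ {x}] x :=
    hdiff (Iio_mem_nhds hδ')
  rw [mem_nhdsWithin] at hdiff'
  obtain ⟨o, ho, hxo, hsubo⟩ := hdiff'
  obtain ⟨r₀, hr₀, hballo⟩ := Metric.isOpen_iff.1 ho x hxo
  have hkey : ∀ r, 0 < r → r ≤ r₀ → ∀ y ∈ ball x r ∩ U,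
      ‖f y - f x - A (y - x)‖ ≤ δ' * ‖y - x‖ := by
    rintro r hr hrr y ⟨hy1, hy2⟩
    rcases eq_or_ne y x with rfl | hyx
    · simp
    · have hyo : y ∈ o := hballo (mem_ball.2 ((mem_ball.1 hy1).trans_le hrr))
      have h3 : ‖f y - f x - A (y - x)‖ / ‖y - x‖ < δ' :=
        hsubo ⟨hyo, hy2, by simpa using hyx⟩
      have hpos : 0 < ‖y - x‖ := by rwa [norm_pos_iff, sub_ne_zero]
      exact le_of_lt ((div_lt_iff₀ hpos).1 h3)
  have hupper : ∀ r, 0 < r → r ≤ r₀ →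
      EMetric.diam (f '' (ball x r ∩ U)) ≤ ENNReal.ofReal ((2 * ‖A‖ + δ) * r) := by
    intro r hr hrr
    have hb : ∀ y ∈ ball x r ∩ U, ‖f y - f x‖ ≤ (‖A‖ + δ') * r := by
      intro y hy
      have h1 := hkey r hr hrr y hy
      have h2 : ‖y - x‖ ≤ r := le_of_lt (by rw [← dist_eq_norm]; exact mem_ball.1 hy.1)
      have h0 : (0:ℝ) ≤ ‖y - x‖ := norm_nonneg _
      calc ‖f y - f x‖ = ‖(f y - f x - A (y - x)) + A (y - x)‖ := by rw [sub_add_cancel]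
        _ ≤ ‖f y - f x - A (y - x)‖ + ‖A (y - x)‖ := norm_add_le _ _
        _ ≤ δ' * ‖y - x‖ + ‖A‖ * ‖y - x‖ := add_le_add h1 (A.le_opNorm _)
        _ ≤ (‖A‖ + δ') * r := by nlinarith
    refine EMetric.diam_le ?_
    rintro _ ⟨y₁, hy₁, rfl⟩ _ ⟨y₂, hy₂, rfl⟩
    rw [edist_dist]
    refine ENNReal.ofReal_le_ofReal ?_
    calc dist (f y₁) (f y₂) ≤ dist (f y₁) (f x) + dist (f x) (f y₂) := dist_triangle _ _ _
      _ = ‖f y₁ - f x‖ + ‖f y₂ - f x‖ := by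
          rw [dist_eq_norm, dist_comm, dist_eq_norm]
      _ ≤ (‖A‖ + δ') * r + (‖A‖ + δ') * r := add_le_add (hb y₁ hy₁) (hb y₂ hy₂)
      _ ≤ (2 * ‖A‖ + δ) * r := by nlinarith
  rcases le_or_gt (2 * ‖A‖ - δ) 0 with hc | hc
  · filter_upwards [Ioo_mem_nhdsGT_of_mem ⟨le_refl (0:ℝ), hr₀⟩] with r hr
    refine ⟨?_, hupper r hr.1 hr.2.le⟩
    rw [ENNReal.ofReal_of_nonpos (mul_nonpos_of_nonpos_of_nonneg hc hr.1.le)]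
    exact zero_le
  · -- nontrivial lower bound
    have hApos : 0 < ‖A‖ := by nlinarith
    obtain ⟨v, hv1, hvA⟩ := exists_opNorm_eq_aux hn A
    set ε : ℝ := min (δ / (8 * (‖A‖ + 1))) 4⁻¹ with hεdef
    have hε : 0 < ε := lt_min (by positivity) (by norm_num)
    have hε4 : ε ≤ 4⁻¹ := min_le_right _ _
    have hεδ : ε * (8 * (‖A‖ + 1)) ≤ δ := by
      have := min_le_left (δ / (8 * (‖A‖ + 1))) 4⁻¹
      rw [hεdef]
      rw [← le_div_iff₀ (by positivity)]
      exact this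
    have hεn : (0:ℝ≥0∞) < ENNReal.ofReal (ε ^ n) := ENNReal.ofReal_pos.2 (by positivity)
    have hd : ∀ᶠ r in 𝓝[>] (0:ℝ),
        volume (ball x r \ U) / volume (ball x r) < ENNReal.ofReal (ε ^ n) :=
      hdens (Iio_mem_nhds hεn)
    filter_upwards [hd, Ioo_mem_nhdsGT_of_mem ⟨le_refl (0:ℝ), hr₀⟩] with r hdr hr
    obtain ⟨hr0, hrr₀⟩ := hr
    refine ⟨?_, hupper r hr0 hrr₀.le⟩
    haveI : Nontrivial (En n) :=
      nontrivial_of_ne v 0 (fun h => by rw [h, norm_zero] at hv1; norm_num at hv1)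
    have hBvol : ∀ z : En n,
        volume (ball z (ε * r)) = ENNReal.ofReal (ε ^ n) * volume (ball x r) := by
      intro z
      rw [Measure.addHaar_ball volume z (by positivity : (0:ℝ) ≤ ε * r),
        Measure.addHaar_ball volume x hr0.le, finrank_euclideanSpace_fin, ← mul_assoc,
        ← ENNReal.ofReal_mul (by positivity), mul_pow]
    have hne : ∀ z : En n, ball z (ε * r) ⊆ ball x r → (ball z (ε * r) ∩ U).Nonempty := by
      intro z hz
      rw [nonempty_iff_ne_empty]
      intro hemp
      have hsub2 : ball z (ε * r) ⊆ ball x r \ U := fun y hy =>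
        ⟨hz hy, fun hyU => (eq_empty_iff_forall_notMem.1 hemp y ⟨hy, hyU⟩)⟩
      have h1 : volume (ball z (ε * r)) ≤ volume (ball x r \ U) := measure_mono hsub2
      have h2 : volume (ball x r \ U) < ENNReal.ofReal (ε ^ n) * volume (ball x r) :=
        (ENNReal.div_lt_iff (Or.inl (measure_ball_pos _ _ hr0).ne')
          (Or.inl measure_ball_lt_top.ne)).1 hdr
      rw [hBvol z] at h1
      exact lt_irrefl _ (h1.trans_lt h2)
    set s : ℝ := (1 - ε) * r with hsdef
    have hs_pos : 0 < s := by
      have : ε < 1 := lt_of_le_of_lt hε4 (by norm_num)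
      rw [hsdef]; nlinarith
    have hdist : ∀ c : En n, dist (c + s • v) c = s := by
      intro c
      rw [dist_eq_norm, add_sub_cancel_left, norm_smul, hv1, mul_one,
        Real.norm_eq_abs, abs_of_pos hs_pos]
    have hsubp : ball (x + s • v) (ε * r) ⊆ ball x r := by
      intro y hy
      rw [mem_ball] at hy ⊢
      calc dist y x ≤ dist y (x + s • v) + dist (x + s • v) x := dist_triangle _ _ _
        _ < ε * r + s := by rw [hdist x]; exact add_lt_add_left hy _
        _ = r := by rw [hsdef]; ring
    have hsubm : ball (x - s • v) (ε * r) ⊆ ball x r := by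
      intro y hy
      rw [mem_ball] at hy ⊢
      have hd2 : dist (x - s • v) x = s := by
        rw [dist_eq_norm, sub_sub_cancel_left, norm_neg, norm_smul, hv1, mul_one,
          Real.norm_eq_abs, abs_of_pos hs_pos]
      calc dist y x ≤ dist y (x - s • v) + dist (x - s • v) x := dist_triangle _ _ _
        _ < ε * r + s := by rw [hd2]; exact add_lt_add_left hy _
        _ = r := by rw [hsdef]; ring
    obtain ⟨yp, hypb, hypU⟩ := hne _ hsubp
    obtain ⟨ym, hymb, hymU⟩ := hne _ hsubm
    have hypx : yp ∈ ball x r := hsubp hypb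
    have hymx : ym ∈ ball x r := hsubm hymb
    have hp1 := hkey r hr0 hrr₀.le yp ⟨hypx, hypU⟩
    have hm1 := hkey r hr0 hrr₀.le ym ⟨hymx, hymU⟩
    have hnp : ‖yp - x‖ ≤ r := le_of_lt (by rw [← dist_eq_norm]; exact mem_ball.1 hypx)
    have hnm : ‖ym - x‖ ≤ r := le_of_lt (by rw [← dist_eq_norm]; exact mem_ball.1 hymx)
    have hap : ‖yp - (x + s • v)‖ ≤ ε * r :=
      le_of_lt (by rw [← dist_eq_norm]; exact mem_ball.1 hypb)
    have ham : ‖ym - (x - s • v)‖ ≤ ε * r :=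
      le_of_lt (by rw [← dist_eq_norm]; exact mem_ball.1 hymb)
    -- lower bound for ‖A (yp - ym)‖
    have e2 : A (yp - ym) = (2 * s) • A v + A (yp - (x + s • v)) - A (ym - (x - s • v)) := by
      rw [← _root_.map_smul, ← map_add, ← map_sub]
      congr 1
      module
    have hAv2 : ‖(2 * s) • A v‖ = 2 * s * ‖A‖ := by
      rw [norm_smul, Real.norm_eq_abs, abs_of_pos (by positivity), hvA]
    have hAp : ‖A (yp - (x + s • v))‖ ≤ ‖A‖ * (ε * r) :=
      (A.le_opNorm _).trans (mul_le_mul_of_nonneg_left hap hA0)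
    have hAm : ‖A (ym - (x - s • v))‖ ≤ ‖A‖ * (ε * r) :=
      (A.le_opNorm _).trans (mul_le_mul_of_nonneg_left ham hA0)
    have hAlow : 2 * s * ‖A‖ - 2 * (‖A‖ * (ε * r)) ≤ ‖A (yp - ym)‖ := by
      have t1 : ‖(2 * s) • A v‖ ≤ ‖A (yp - ym)‖ + ‖A (yp - (x + s • v))‖
          + ‖A (ym - (x - s • v))‖ := by
        calc ‖(2 * s) • A v‖
            = ‖A (yp - ym) - A (yp - (x + s • v)) + A (ym - (x - s • v))‖ := by
              rw [e2]; congr 1; abel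
          _ ≤ ‖A (yp - ym) - A (yp - (x + s • v))‖ + ‖A (ym - (x - s • v))‖ :=
              norm_add_le _ _
          _ ≤ ‖A (yp - ym)‖ + ‖A (yp - (x + s • v))‖ + ‖A (ym - (x - s • v))‖ := by
              have := norm_sub_le (A (yp - ym)) (A (yp - (x + s • v)))
              linarith
      rw [hAv2] at t1
      linarith
    -- lower bound for ‖f yp - f ym‖
    have e1 : A (yp - ym) = (f yp - f ym) -
        ((f yp - f x - A (yp - x)) - (f ym - f x - A (ym - x))) := by
      simp only [map_sub]
      abel
    have hflow : ‖A (yp - ym)‖ - δ' * ‖yp - x‖ - δ' * ‖ym - x‖ ≤ ‖f yp - f ym‖ := by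
      have t1 : ‖A (yp - ym)‖ ≤ ‖f yp - f ym‖ + (‖f yp - f x - A (yp - x)‖
          + ‖f ym - f x - A (ym - x)‖) := by
        calc ‖A (yp - ym)‖
            = ‖(f yp - f ym) - ((f yp - f x - A (yp - x)) - (f ym - f x - A (ym - x)))‖ := by
              rw [← e1]
          _ ≤ ‖f yp - f ym‖ + ‖(f yp - f x - A (yp - x)) - (f ym - f x - A (ym - x))‖ :=
              norm_sub_le _ _
          _ ≤ ‖f yp - f ym‖ + (‖f yp - f x - A (yp - x)‖ + ‖f ym - f x - A (ym - x)‖) := by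
              have := norm_sub_le (f yp - f x - A (yp - x)) (f ym - f x - A (ym - x))
              linarith
      have t2 : ‖f yp - f x - A (yp - x)‖ ≤ δ' * ‖yp - x‖ := hp1
      have t3 : ‖f ym - f x - A (ym - x)‖ ≤ δ' * ‖ym - x‖ := hm1
      linarith
    have hfinal : (2 * ‖A‖ - δ) * r ≤ ‖f yp - f ym‖ := by
      have hδ'n : δ' * ‖yp - x‖ ≤ δ' * r := mul_le_mul_of_nonneg_left hnp hδ'.le
      have hδ'n2 : δ' * ‖ym - x‖ ≤ δ' * r := mul_le_mul_of_nonneg_left hnm hδ'.le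
      have hδ'r : δ' * r = δ / 4 * r := by rw [hδ'def]
      have hAlow' : 2 * (‖A‖ * r) - 4 * (‖A‖ * (ε * r)) ≤ ‖A (yp - ym)‖ := by
        have hs2 : 2 * s * ‖A‖ = 2 * (‖A‖ * r) - 2 * (‖A‖ * (ε * r)) := by rw [hsdef]; ring
        linarith [hAlow, hs2]
      have k0 : (0:ℝ) ≤ ε * r := by positivity
      have k1 : 8 * (‖A‖ * (ε * r)) + 8 * (ε * r) ≤ δ * r := by
        have he : 8 * (‖A‖ * (ε * r)) + 8 * (ε * r) = ε * (8 * (‖A‖ + 1)) * r := by ring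
        rw [he]
        exact mul_le_mul_of_nonneg_right hεδ hr0.le
      linarith [hflow, hδ'n, hδ'n2, hδ'r, hAlow', k0, k1]
    calc ENNReal.ofReal ((2 * ‖A‖ - δ) * r) ≤ ENNReal.ofReal (dist (f yp) (f ym)) := by
          rw [dist_eq_norm]; exact ENNReal.ofReal_le_ofReal hfinal
      _ = edist (f yp) (f ym) := (edist_dist _ _).symm
      _ ≤ EMetric.diam (f '' (ball x r ∩ U)) :=
          EMetric.edist_le_diam_of_mem (mem_image_of_mem f ⟨hypx, hypU⟩)
            (mem_image_of_mem f ⟨hymx, hymU⟩)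

/-- If `f` is continuous on an open `Ω ∋ x`, `U ∋ x` has Lebesgue density 1 at `x`, and `f`
is differentiable at `x` relative to `U` with derivative `A`, then
`limsup_{r→0} diam f(B(x,r) ∩ U)ⁿ / |B(x,r)| = (2ⁿ/ω_n)‖A‖ⁿ`. -/
theorem limsup_diam_pow_div_ball (hn : 2 ≤ n) (Ω : Set (En n)) (hΩ : IsOpen Ω)
    (f : En n → En n) (hf : ContinuousOn f Ω) (x : En n) (hx : x ∈ Ω)
    (U : Set (En n)) (hxU : x ∈ U) (A : En n →L[ℝ] En n)
    (hdens : Tendsto (fun r : ℝ => volume (ball x r \ U) / volume (ball x r)) (𝓝[>] 0) (𝓝 0))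
    (hdiff : Tendsto (fun y => ‖f y - f x - A (y - x)‖ / ‖y - x‖) (𝓝[U \ {x}] x) (𝓝 0)) :
    Filter.limsup (fun r : ℝ => EMetric.diam (f '' (ball x r ∩ U)) ^ n / volume (ball x r))
        (𝓝[>] 0)
      = ENNReal.ofReal (2 ^ n * ‖A‖ ^ n) / volume (ball (0 : En n) 1) := by
  have hn0 : 0 < n := lt_of_lt_of_le two_pos hn
  obtain ⟨v, hv1, -⟩ := exists_opNorm_eq_aux hn0 A
  haveI : Nontrivial (En n) :=
    nontrivial_of_ne v 0 (fun h => by rw [h, norm_zero] at hv1; norm_num at hv1)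
  have hω0 : volume (ball (0 : En n) 1) ≠ 0 := (measure_ball_pos _ _ one_pos).ne'
  have hωt : volume (ball (0 : En n) 1) ≠ ∞ := measure_ball_lt_top.ne
  have hT : Tendsto (fun r : ℝ => EMetric.diam (f '' (ball x r ∩ U)) / ENNReal.ofReal r)
      (𝓝[>] 0) (𝓝 (ENNReal.ofReal (2 * ‖A‖))) := by
    rw [ENNReal.tendsto_nhds ENNReal.ofReal_ne_top]
    intro ε hε
    obtain ⟨δ, hδ, hδε⟩ : ∃ δ : ℝ, 0 < δ ∧ ENNReal.ofReal δ ≤ ε := by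
      rcases eq_or_ne ε ∞ with rfl | hε'
      · exact ⟨1, one_pos, le_top⟩
      · exact ⟨ε.toReal, ENNReal.toReal_pos hε.ne' hε', by rw [ENNReal.ofReal_toReal hε']⟩
    filter_upwards [diam_bounds hn0 f x U A hdens hdiff δ hδ, self_mem_nhdsWithin]
      with r hbd hr
    obtain ⟨hlo, hhi⟩ := hbd
    have hr : (0:ℝ) < r := hr
    have hR0 : ENNReal.ofReal r ≠ 0 := (ENNReal.ofReal_pos.2 hr).ne'
    have hRt : ENNReal.ofReal r ≠ ∞ := ENNReal.ofReal_ne_top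
    constructor
    · calc ENNReal.ofReal (2 * ‖A‖) - ε
          ≤ ENNReal.ofReal (2 * ‖A‖) - ENNReal.ofReal δ := tsub_le_tsub_left hδε _
        _ = ENNReal.ofReal (2 * ‖A‖ - δ) := (ENNReal.ofReal_sub _ hδ.le).symm
        _ = ENNReal.ofReal ((2 * ‖A‖ - δ) * r) / ENNReal.ofReal r := by
            rw [ENNReal.ofReal_mul' hr.le, mul_div_assoc, ENNReal.div_self hR0 hRt, mul_one]
        _ ≤ _ := ENNReal.div_le_div_right hlo _
    · calc EMetric.diam (f '' (ball x r ∩ U)) / ENNReal.ofReal r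
          ≤ ENNReal.ofReal ((2 * ‖A‖ + δ) * r) / ENNReal.ofReal r :=
            ENNReal.div_le_div_right hhi _
        _ = ENNReal.ofReal (2 * ‖A‖ + δ) := by
            rw [ENNReal.ofReal_mul' hr.le, mul_div_assoc, ENNReal.div_self hR0 hRt, mul_one]
        _ = ENNReal.ofReal (2 * ‖A‖) + ENNReal.ofReal δ :=
            ENNReal.ofReal_add (by positivity) hδ.le
        _ ≤ ENNReal.ofReal (2 * ‖A‖) + ε := add_le_add_right hδε _
  have hT2 : Tendsto
      (fun r : ℝ => (EMetric.diam (f '' (ball x r ∩ U)) / ENNReal.ofReal r) ^ n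
        * (volume (ball (0 : En n) 1))⁻¹) (𝓝[>] 0)
      (𝓝 (ENNReal.ofReal (2 * ‖A‖) ^ n * (volume (ball (0 : En n) 1))⁻¹)) :=
    ENNReal.Tendsto.mul_const (ENNReal.Tendsto.pow hT) (Or.inr (ENNReal.inv_ne_top.2 hω0))
  have heq : ∀ᶠ r in 𝓝[>] (0:ℝ),
      EMetric.diam (f '' (ball x r ∩ U)) ^ n / volume (ball x r)
        = (EMetric.diam (f '' (ball x r ∩ U)) / ENNReal.ofReal r) ^ n
          * (volume (ball (0 : En n) 1))⁻¹ := by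
    filter_upwards [self_mem_nhdsWithin] with r hr
    have hr : (0:ℝ) < r := hr
    have hR0 : ENNReal.ofReal r ≠ 0 := (ENNReal.ofReal_pos.2 hr).ne'
    have hRt : ENNReal.ofReal r ≠ ∞ := ENNReal.ofReal_ne_top
    rw [Measure.addHaar_ball volume x hr.le, finrank_euclideanSpace_fin,
      ENNReal.ofReal_pow hr.le]
    calc EMetric.diam (f '' (ball x r ∩ U)) ^ n
          / ((ENNReal.ofReal r) ^ n * volume (ball (0 : En n) 1))
        = EMetric.diam (f '' (ball x r ∩ U)) ^ n * ((ENNReal.ofReal r) ^ n)⁻¹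
          * (volume (ball (0 : En n) 1))⁻¹ := by
          rw [div_eq_mul_inv, ENNReal.mul_inv (Or.inr hωt) (Or.inr hω0), mul_assoc]
      _ = (EMetric.diam (f '' (ball x r ∩ U)) / ENNReal.ofReal r) ^ n
          * (volume (ball (0 : En n) 1))⁻¹ := by
          rw [div_eq_mul_inv, mul_pow, ENNReal.inv_pow]
  rw [limsup_congr heq, hT2.limsup_eq, ← ENNReal.ofReal_pow (by positivity), mul_pow,
    div_eq_mul_inv]


end
end
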